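/- Let (F₁,…,F_d) be a flow chart between probability measures μ and ν on the grid G = {1,…,N}^d, and suppose π is a nonnegative function on G × G such that for every i ∈ {1,…,d} and all indices, Σ_{a₁,…,a_{i−1},b_{i+1},…,b_d} π(a₁,…,a_d; b₁,…,b_d) = f⁽ⁱ⁾_{b₁,…,b_{i−1},a_i,…,a_d,b_i}. Then π is a transport plan between μ and ν: Σ_{b∈G} π(a,b) = μ(a) for all a ∈ G and Σ_{a∈G} π(a,b) = ν(b) for all b ∈ G. -/

import Mathlib

/-- A flow chart between `μ` and `ν` on the grid `{1,…,N}^d`: a `d`-tuple of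
nonnegative families `F i : (Fin d → Fin N) → Fin N → ℝ`, where the first argument
`g` of `F i` encodes `(b₁,…,b_{i-1}, a_i,…,a_d)` (coordinates `k < i` hold `b_k`,
coordinates `k ≥ i` hold `a_k`) and the last argument is `b_i`. -/
def IsFlowChart {N d : ℕ} (μ ν : (Fin d → Fin N) → ℝ)
    (F : Fin d → (Fin d → Fin N) → Fin N → ℝ) : Prop :=
  (∀ i g β, 0 ≤ F i g β) ∧
  (∀ hd : 0 < d, ∀ a : Fin d → Fin N, ∑ β : Fin N, F ⟨0, hd⟩ a β = μ a) ∧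
  (∀ hd : 0 < d, ∀ b : Fin d → Fin N,
      ∑ α : Fin N, F ⟨d - 1, Nat.sub_lt hd Nat.one_pos⟩
        (Function.update b ⟨d - 1, Nat.sub_lt hd Nat.one_pos⟩ α)
        (b ⟨d - 1, Nat.sub_lt hd Nat.one_pos⟩) = ν b) ∧
  (∀ i : Fin d, ∀ hi : (i : ℕ) + 1 < d, ∀ h : Fin d → Fin N,
      ∑ α : Fin N, F i (Function.update h i α) (h i)
        = ∑ β : Fin N, F ⟨(i : ℕ) + 1, hi⟩ h β)

/-- The family `f⁽ⁱ⁾` obtained from `π` by summing over `a₁,…,a_{i−1}` and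
`b_{i+1},…,b_d`: here `g` encodes `(b₁,…,b_{i−1}, a_i,…,a_d)` (coordinates `k < i`
hold `b_k`, coordinates `k ≥ i` hold `a_k`) and `β` is `b_i`, so we sum `π a b` over
all `a`, `b` compatible with this data. -/
def marg {N d : ℕ} (π : (Fin d → Fin N) → (Fin d → Fin N) → ℝ)
    (i : Fin d) (g : Fin d → Fin N) (β : Fin N) : ℝ :=
  ∑ a : Fin d → Fin N, ∑ b : Fin d → Fin N,
    if (∀ k, i ≤ k → a k = g k) ∧ (∀ k, k < i → b k = g k) ∧ b i = β then π a b else 0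

lemma sum_ite_and_eq {N : ℕ} (β0 : Fin N) (P : Prop) [Decidable P] (x : ℝ) :
    ∑ β : Fin N, (if P ∧ β0 = β then x else 0) = if P then x else 0 := by
  simp only [ite_and]
  split_ifs with h
  · rw [Finset.sum_ite_eq Finset.univ β0 (fun _ => x)]; simp
  · simp

/-- Let `F` be a flow chart between probability measures `μ` and
`ν` on the grid `{1,…,N}^d`, and let `π` be a nonnegative function on `G × G`
whose partial marginals coincide with the families `F i` for every `i`. Then `π`
is a transport plan between `μ` and `ν`. -/
theorem glued_is_plan (N d : ℕ) (hN : 0 < N) (hd : 0 < d)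
    (μ ν : (Fin d → Fin N) → ℝ)
    (hμ0 : ∀ a, 0 ≤ μ a) (hμ1 : ∑ a, μ a = 1)
    (hν0 : ∀ b, 0 ≤ ν b) (hν1 : ∑ b, ν b = 1)
    (F : Fin d → (Fin d → Fin N) → Fin N → ℝ)
    (hF : IsFlowChart μ ν F)
    (π : (Fin d → Fin N) → (Fin d → Fin N) → ℝ)
    (hπ0 : ∀ a b, 0 ≤ π a b)
    (hπF : ∀ (i : Fin d) (g : Fin d → Fin N) (β : Fin N), marg π i g β = F i g β) :
    (∀ a, ∑ b, π a b = μ a) ∧ (∀ b, ∑ a, π a b = ν b) := by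
  classical
  constructor
  · intro a
    have hμ := hF.2.1 hd a
    rw [← hμ]
    have hFm : ∀ β, F ⟨0, hd⟩ a β = marg π ⟨0, hd⟩ a β := fun β => (hπF _ _ _).symm
    simp only [hFm, marg]
    have hc : ∀ (a' b : Fin d → Fin N) (β : Fin N),
        ((∀ k, (⟨0, hd⟩ : Fin d) ≤ k → a' k = a k) ∧
          (∀ k, k < (⟨0, hd⟩ : Fin d) → b k = a k) ∧ b ⟨0, hd⟩ = β)
        ↔ (a' = a ∧ b ⟨0, hd⟩ = β) := by
      intro a' b β
      constructor
      · rintro ⟨h1, -, h3⟩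
        exact ⟨funext fun k => h1 k (Fin.le_def.mpr (Nat.zero_le _)), h3⟩
      · rintro ⟨rfl, h3⟩
        exact ⟨fun k _ => rfl, fun k hk => absurd hk (by simp [Fin.lt_def]), h3⟩
    simp only [hc]
    rw [Finset.sum_comm]
    have step : ∀ a' : Fin d → Fin N,
        (∑ β : Fin N, ∑ b : Fin d → Fin N,
          if a' = a ∧ b ⟨0, hd⟩ = β then π a' b else 0)
        = if a' = a then ∑ b, π a' b else 0 := by
      intro a'
      rw [Finset.sum_comm]
      rw [Finset.sum_congr rfl fun b _ => sum_ite_and_eq (b ⟨0, hd⟩) (a' = a) (π a' b)]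
      split_ifs <;> simp
    simp only [step]
    rw [Finset.sum_ite_eq' Finset.univ a (fun a' => ∑ b, π a' b)]
    simp
  · intro b
    set i1 : Fin d := ⟨d - 1, Nat.sub_lt hd Nat.one_pos⟩ with hi1
    have hν' := hF.2.2.1 hd b
    rw [← hν']
    have hFm : ∀ α, F i1 (Function.update b i1 α) (b i1)
        = marg π i1 (Function.update b i1 α) (b i1) := fun α => (hπF _ _ _).symm
    have hk1 : ∀ k : Fin d, k ≤ i1 := fun k =>
      Fin.le_def.mpr (Nat.le_sub_one_of_lt k.isLt)
    have hc : ∀ (α : Fin N) (a' b' : Fin d → Fin N),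
        ((∀ k, i1 ≤ k → a' k = Function.update b i1 α k) ∧
          (∀ k, k < i1 → b' k = Function.update b i1 α k) ∧ b' i1 = b i1)
        ↔ (b' = b ∧ a' i1 = α) := by
      intro α a' b'
      constructor
      · rintro ⟨h1, h2, h3⟩
        refine ⟨funext fun k => ?_, by simpa using h1 i1 le_rfl⟩
        rcases lt_or_eq_of_le (hk1 k) with hk | hk
        · rw [h2 k hk, Function.update_of_ne (ne_of_lt hk)]
        · subst hk; exact h3
      · rintro ⟨rfl, h1⟩
        refine ⟨?_, ?_, rfl⟩
        · intro k hk
          have : k = i1 := le_antisymm (hk1 k) hk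
          subst this; simp [h1]
        · intro k hk
          rw [Function.update_of_ne (ne_of_lt hk)]
    rw [Finset.sum_congr rfl fun α _ => hFm α]
    simp only [hFm, marg, hc]
    rw [Finset.sum_comm]
    have step : ∀ a' : Fin d → Fin N,
        (∑ α : Fin N, ∑ b' : Fin d → Fin N,
          if b' = b ∧ a' i1 = α then π a' b' else 0)
        = π a' b := by
      intro a'
      rw [Finset.sum_comm]
      rw [Finset.sum_congr rfl fun b' _ => sum_ite_and_eq (a' i1) (b' = b) (π a' b')]
      rw [Finset.sum_ite_eq' Finset.univ b (fun b' => π a' b')]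
      simp
    exact Finset.sum_congr rfl fun a' _ => by convert (step a').symm
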